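/- For all n ≥ 0 and h ≥ 0, the number of Motzkin paths of length n with height exactly h that have no horizontal step at level h equals S(n, 2h+2) − S(n, 2h+3), where for a ≥ 1, S(n, a) := ∑_{k≥1} [ T(n, n+2−k·a) − 2·T(n, n−k·a) + T(n, n−2−k·a) ] (a finite sum, since T(n, j) = 0 for j < 0). -/

import Mathlib

open Finset
open scoped Classical

/-- A step: `+1`, `-1` or `0`. -/
abbrev Step : Type := ({1, -1, 0} : Finset ℤ)

/-- Partial sum of the first `k` steps. -/
def psum {n : ℕ} (w : Fin n → Step) (k : ℕ) : ℤ :=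
  ∑ i : Fin n, if (i : ℕ) < k then (w i : ℤ) else 0

/-- `w` is a Motzkin path: all partial sums are nonnegative and the total sum is `0`. -/
def IsMotzkin {n : ℕ} (w : Fin n → Step) : Prop :=
  (∀ k ∈ Finset.range (n + 1), 0 ≤ psum w k) ∧ psum w n = 0

/-- The height of a path: the maximum of its partial sums (`0` for the empty path). -/
def height {n : ℕ} (w : Fin n → Step) : ℤ :=
  (Finset.range (n + 1)).sup' (Finset.nonempty_range_iff.mpr (Nat.succ_ne_zero n)) (psum w)

/-- `w` has a horizontal step at level `j`: some step is `0` and the partial sum up to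
and including that step equals `j`. -/
def HasHorizAt {n : ℕ} (w : Fin n → Step) (j : ℤ) : Prop :=
  ∃ i : Fin n, (w i : ℤ) = 0 ∧ psum w ((i : ℕ) + 1) = j

/-- The trinomial coefficient `T n k`: the coefficient of `t^k` in `(1 + t + t^2)^n`,
extended by `0` for negative `k`. -/
noncomputable def T (n : ℕ) (k : ℤ) : ℤ :=
  if 0 ≤ k then ((1 + Polynomial.X + Polynomial.X ^ 2 : Polynomial ℤ) ^ n).coeff k.toNat
  else 0

/-- `S n a = ∑_{k ≥ 1} (T n (n+2-k·a) - 2 T n (n-k·a) + T n (n-2-k·a))`; for `a ≥ 1`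
all terms with `k > n + 2` vanish, so the sum may be truncated there. -/
noncomputable def S (n a : ℕ) : ℤ :=
  ∑ k ∈ Finset.Icc 1 (n + 2),
    (T n ((n : ℤ) + 2 - k * a) - 2 * T n ((n : ℤ) - k * a) + T n ((n : ℤ) - 2 - k * a))

/- ### infrastructure -/

lemma step_cases (s : Step) : (s : ℤ) = 1 ∨ (s : ℤ) = -1 ∨ (s : ℤ) = 0 := by
  have h := s.2
  simp only [Finset.mem_insert, Finset.mem_singleton] at h
  exact h

noncomputable def cnt (n : ℕ) (P : (Fin n → Step) → Prop) : ℤ :=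
  ((Finset.univ.filter P).card : ℤ)

lemma cnt_congr {n : ℕ} {P Q : (Fin n → Step) → Prop} (h : ∀ w, P w ↔ Q w) :
    cnt n P = cnt n Q := by
  unfold cnt; congr 2; apply filter_congr; intro w _; simp [h w]

lemma cnt_false {n : ℕ} {P : (Fin n → Step) → Prop} (h : ∀ w, ¬ P w) : cnt n P = 0 := by
  unfold cnt
  rw [filter_false_of_mem (fun w _ => h w)]; simp

lemma cnt_zero (P : (Fin 0 → Step) → Prop) :
    cnt 0 P = if P (fun i => i.elim0) then 1 else 0 := by
  unfold cnt
  by_cases h : P (fun i => i.elim0)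
  · rw [filter_true_of_mem, if_pos h]
    · simp [card_univ]
    · intro x _
      have : x = (fun i => i.elim0) := Subsingleton.elim _ _
      rwa [this]
  · rw [filter_false_of_mem, if_neg h]
    · simp
    · intro x _ hx
      exact h (by rwa [show (fun (i : Fin 0) => i.elim0) = x from Subsingleton.elim _ _])

lemma psum_castSucc {n : ℕ} (w : Fin (n+1) → Step) {k : ℕ} (hk : k ≤ n) :
    psum w k = psum (fun i : Fin n => w i.castSucc) k := by
  unfold psum
  rw [Fin.sum_univ_castSucc]
  simp only [Fin.coe_castSucc, Fin.val_last]
  rw [if_neg (by omega)]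
  ring

lemma psum_snoc {n : ℕ} (w : Fin n → Step) (s : Step) {k : ℕ} (hk : k ≤ n) :
    psum (Fin.snoc w s) k = psum w k := by
  rw [psum_castSucc _ hk]
  simp [Fin.snoc_castSucc]

lemma psum_snoc_last {n : ℕ} (w : Fin n → Step) (s : Step) :
    psum (Fin.snoc w s) (n+1) = psum w n + (s : ℤ) := by
  unfold psum
  rw [Fin.sum_univ_castSucc]
  simp only [Fin.coe_castSucc, Fin.val_last, Fin.snoc_castSucc, Fin.snoc_last]
  rw [if_pos (by omega)]
  congr 1
  apply Finset.sum_congr rfl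
  intro i _
  have hi : (i : ℕ) < n := i.2
  rw [if_pos (by omega), if_pos (by omega)]

lemma psum_zero {n : ℕ} (w : Fin n → Step) : psum w 0 = 0 := by
  unfold psum; simp

lemma psum_total {n : ℕ} (w : Fin n → Step) : psum w n = ∑ i : Fin n, (w i : ℤ) := by
  unfold psum
  apply Finset.sum_congr rfl
  intro i _; rw [if_pos i.2]

lemma abs_psum_total_le {n : ℕ} (w : Fin n → Step) : |psum w n| ≤ n := by
  rw [psum_total]
  calc |∑ i : Fin n, (w i : ℤ)| ≤ ∑ i : Fin n, |(w i : ℤ)| := Finset.abs_sum_le_sum_abs _ _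
  _ ≤ ∑ _i : Fin n, 1 := by
      apply Finset.sum_le_sum
      intro i _
      rcases step_cases (w i) with h | h | h <;> simp [h]
  _ = n := by simp

/- ### last-step decomposition -/

def up : Step := ⟨1, by decide⟩
def dn : Step := ⟨-1, by decide⟩
def fl : Step := ⟨0, by decide⟩

lemma univ_step : (Finset.univ : Finset Step) = {up, dn, fl} := by
  ext s
  have h := s.2
  simp only [Finset.mem_insert, Finset.mem_singleton] at h
  simp only [Finset.mem_univ, Finset.mem_insert, Finset.mem_singleton, true_iff]
  rcases h with h | h | h
  · exact Or.inl (Subtype.ext h)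
  · exact Or.inr (Or.inl (Subtype.ext h))
  · exact Or.inr (Or.inr (Subtype.ext h))

lemma card_fiber {n : ℕ} (P : (Fin (n+1) → Step) → Prop) (s : Step) :
    (Finset.univ.filter fun w : Fin (n+1) → Step => P w ∧ w (Fin.last n) = s).card
      = (Finset.univ.filter fun w : Fin n → Step => P (Fin.snoc w s)).card := by
  apply Finset.card_nbij' (i := fun w => Fin.init w) (j := fun w => Fin.snoc w s)
  · intro w hw
    simp only [Finset.mem_coe, Finset.mem_filter, Finset.mem_univ, true_and] at hw ⊢
    rcases hw with ⟨h1, h2⟩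
    rwa [← h2, Fin.snoc_init_self]
  · intro w hw
    simp only [Finset.mem_coe, Finset.mem_filter, Finset.mem_univ, true_and] at hw ⊢
    exact ⟨hw, by simp⟩
  · intro w hw
    simp only [Finset.mem_coe, Finset.mem_filter, Finset.mem_univ, true_and] at hw
    beta_reduce
    rw [← hw.2, Fin.snoc_init_self]
  · intro w _
    exact Fin.init_snoc ..

lemma cnt_succ (n : ℕ) (P : (Fin (n+1) → Step) → Prop) :
    cnt (n+1) P = cnt n (fun w => P (Fin.snoc w up)) + cnt n (fun w => P (Fin.snoc w dn))
      + cnt n (fun w => P (Fin.snoc w fl)) := by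
  unfold cnt
  have h1 : (Finset.univ.filter P).card
      = ∑ s : Step, (Finset.univ.filter fun w => P w ∧ w (Fin.last n) = s).card := by
    rw [Finset.card_eq_sum_card_fiberwise (f := fun w => w (Fin.last n))
      (t := Finset.univ) (fun x _ => Finset.mem_univ _)]
    apply Finset.sum_congr rfl
    intro s _
    rw [Finset.filter_filter]
  rw [h1]
  rw [show (Finset.univ : Finset Step) = {up, dn, fl} from univ_step]
  rw [Finset.sum_insert (by decide), Finset.sum_insert (by decide), Finset.sum_singleton]
  rw [card_fiber, card_fiber, card_fiber]
  push_cast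
  ring

/- ### unconstrained counts -/

noncomputable def NN (n : ℕ) (j : ℤ) : ℤ := cnt n fun w => psum w n = j

lemma NN_zero (j : ℤ) : NN 0 j = if j = 0 then 1 else 0 := by
  unfold NN
  rw [cnt_zero]
  rw [psum_zero]
  by_cases h : j = 0
  · rw [if_pos h.symm, if_pos h]
  · rw [if_neg (fun hh => h hh.symm), if_neg h]

lemma NN_succ (n : ℕ) (j : ℤ) : NN (n+1) j = NN n (j-1) + NN n (j+1) + NN n j := by
  unfold NN
  rw [cnt_succ]
  congr 1
  · congr 1
    · apply cnt_congr; intro w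
      rw [psum_snoc_last]
      show psum w n + (1 : ℤ) = j ↔ _
      omega
    · apply cnt_congr; intro w
      rw [psum_snoc_last]
      show psum w n + (-1 : ℤ) = j ↔ _
      omega
  · apply cnt_congr; intro w
    rw [psum_snoc_last]
    show psum w n + (0 : ℤ) = j ↔ _
    omega

lemma NN_vanish {n : ℕ} {j : ℤ} (h : (n : ℤ) < |j|) : NN n j = 0 := by
  apply cnt_false
  intro w hw
  have := abs_psum_total_le w
  rw [hw] at this
  omega

def negStep (s : Step) : Step :=
  ⟨-(s : ℤ), by
    have h := step_cases s
    simp only [Finset.mem_insert, Finset.mem_singleton]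
    omega⟩

lemma coe_negStep (s : Step) : ((negStep s : Step) : ℤ) = -(s : ℤ) := rfl

lemma psum_negStep {n : ℕ} (w : Fin n → Step) (k : ℕ) :
    psum (fun i => negStep (w i)) k = -psum w k := by
  unfold psum
  rw [← Finset.sum_neg_distrib]
  apply Finset.sum_congr rfl
  intro i _
  rw [coe_negStep]
  split <;> simp

lemma NN_symm (n : ℕ) (j : ℤ) : NN n j = NN n (-j) := by
  unfold NN cnt
  congr 1
  apply Finset.card_nbij' (i := fun w k => negStep (w k)) (j := fun w k => negStep (w k))
  · intro w hw
    simp only [Finset.mem_coe, Finset.mem_filter, Finset.mem_univ, true_and] at hw ⊢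
    rw [psum_negStep, hw]
  · intro w hw
    simp only [Finset.mem_coe, Finset.mem_filter, Finset.mem_univ, true_and] at hw ⊢
    rw [psum_negStep, hw]; ring
  · intro w _
    funext k
    apply Subtype.ext
    rw [coe_negStep, coe_negStep]; ring
  · intro w _
    funext k
    apply Subtype.ext
    rw [coe_negStep, coe_negStep]; ring

/- ### constrained counts -/

def Bdd {n : ℕ} (H : ℤ) (w : Fin n → Step) : Prop :=
  ∀ k ≤ n, 0 ≤ psum w k ∧ psum w k ≤ H

lemma Bdd_snoc {n : ℕ} (H : ℤ) (w : Fin n → Step) (s : Step) :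
    Bdd H (Fin.snoc w s) ↔ Bdd H w ∧ (0 ≤ psum w n + (s:ℤ) ∧ psum w n + (s:ℤ) ≤ H) := by
  constructor
  · intro hb
    refine ⟨fun k hk => ?_, ?_⟩
    · have := hb k (by omega)
      rwa [psum_snoc w s hk] at this
    · have := hb (n+1) le_rfl
      rwa [psum_snoc_last] at this
  · rintro ⟨hb, h2⟩ k hk
    rcases Nat.lt_or_ge k (n+1) with h | h
    · rw [psum_snoc w s (by omega)]
      exact hb k (by omega)
    · have hk1 : k = n + 1 := by omega
      rw [hk1, psum_snoc_last]
      exact h2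

lemma HasHorizAt_snoc {n : ℕ} (j : ℤ) (w : Fin n → Step) (s : Step) :
    HasHorizAt (Fin.snoc w s) j ↔ HasHorizAt w j ∨ ((s:ℤ) = 0 ∧ psum w n + (s:ℤ) = j) := by
  constructor
  · rintro ⟨i, h0, hp⟩
    rcases Nat.lt_or_ge (i : ℕ) n with h | h
    · left
      refine ⟨⟨i, h⟩, ?_, ?_⟩
      · have : (Fin.snoc w s : Fin (n+1) → Step) i = w ⟨i, h⟩ := by
          have : i = Fin.castSucc ⟨i, h⟩ := by
            apply Fin.ext; simp
          conv_lhs => rw [this]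
          rw [Fin.snoc_castSucc]
        rwa [this] at h0
      · rwa [psum_snoc w s (by omega)] at hp
    · have hi : i = Fin.last n := by
        apply Fin.ext; simp; omega
      right
      rw [hi] at h0 hp
      have hs : (Fin.snoc w s : Fin (n+1) → Step) (Fin.last n) = s := by simp
      rw [hs] at h0
      refine ⟨h0, ?_⟩
      simp only [Fin.val_last] at hp
      rwa [psum_snoc_last] at hp
  · rintro (⟨i, h0, hp⟩ | ⟨h0, hp⟩)
    · refine ⟨Fin.castSucc i, ?_, ?_⟩
      · rwa [Fin.snoc_castSucc]
      · have : (Fin.castSucc i : ℕ) = (i : ℕ) := rfl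
        rw [this, psum_snoc w s (by omega)]
        exact hp
    · refine ⟨Fin.last n, ?_, ?_⟩
      · have hs : (Fin.snoc w s : Fin (n+1) → Step) (Fin.last n) = s := by simp
        rw [hs]; exact h0
      · simp only [Fin.val_last]
        rw [psum_snoc_last]
        exact hp

noncomputable def CE (n : ℕ) (H j : ℤ) : ℤ := cnt n fun w => Bdd H w ∧ psum w n = j
noncomputable def CO (n : ℕ) (H j : ℤ) : ℤ :=
  cnt n fun w => Bdd H w ∧ psum w n = j ∧ ¬ HasHorizAt w H

lemma CE_out {n : ℕ} {H j : ℤ} (h : j < 0 ∨ H < j) : CE n H j = 0 := by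
  apply cnt_false
  rintro w ⟨hb, hp⟩
  have := hb n le_rfl
  omega

lemma CO_out {n : ℕ} {H j : ℤ} (h : j < 0 ∨ H < j) : CO n H j = 0 := by
  apply cnt_false
  rintro w ⟨hb, hp, _⟩
  have := hb n le_rfl
  omega

lemma CE_negH {n : ℕ} {H j : ℤ} (h : H < 0) : CE n H j = 0 := by
  apply cnt_false
  rintro w ⟨hb, _⟩
  have := hb 0 (Nat.zero_le n)
  rw [psum_zero] at this
  omega

lemma CE_base {H j : ℤ} (hH : 0 ≤ H) : CE 0 H j = if j = 0 then 1 else 0 := by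
  unfold CE
  rw [cnt_zero]
  by_cases h : j = 0
  · rw [if_pos h, if_pos]
    exact ⟨fun k hk => by
      have : k = 0 := Nat.le_zero.mp hk
      subst this
      rw [psum_zero]; omega, by rw [psum_zero, h]⟩
  · rw [if_neg h, if_neg]
    rintro ⟨_, hp⟩
    rw [psum_zero] at hp
    exact h hp.symm

lemma CO_base {H j : ℤ} (hH : 0 ≤ H) : CO 0 H j = if j = 0 then 1 else 0 := by
  unfold CO
  rw [cnt_zero]
  by_cases h : j = 0
  · rw [if_pos h, if_pos]
    refine ⟨fun k hk => by
      have : k = 0 := Nat.le_zero.mp hk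
      subst this
      rw [psum_zero]; omega, by rw [psum_zero, h], ?_⟩
    rintro ⟨i, _⟩
    exact i.elim0
  · rw [if_neg h, if_neg]
    rintro ⟨_, hp, _⟩
    rw [psum_zero] at hp
    exact h hp.symm

lemma CE_rec {n : ℕ} {H j : ℤ} (h0 : 0 ≤ j) (hH : j ≤ H) :
    CE (n+1) H j = CE n H (j-1) + CE n H (j+1) + CE n H j := by
  unfold CE
  rw [cnt_succ]
  congr 1
  · congr 1
    · apply cnt_congr; intro w
      rw [Bdd_snoc, psum_snoc_last]
      show _ ↔ Bdd H w ∧ psum w n = j - 1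
      have : ((up : Step) : ℤ) = 1 := rfl
      rw [this]
      constructor
      · rintro ⟨⟨hb, _⟩, hp⟩; exact ⟨hb, by omega⟩
      · rintro ⟨hb, hp⟩; exact ⟨⟨hb, by omega⟩, by omega⟩
    · apply cnt_congr; intro w
      rw [Bdd_snoc, psum_snoc_last]
      show _ ↔ Bdd H w ∧ psum w n = j + 1
      have : ((dn : Step) : ℤ) = -1 := rfl
      rw [this]
      constructor
      · rintro ⟨⟨hb, _⟩, hp⟩; exact ⟨hb, by omega⟩
      · rintro ⟨hb, hp⟩; exact ⟨⟨hb, by omega⟩, by omega⟩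
  · apply cnt_congr; intro w
    rw [Bdd_snoc, psum_snoc_last]
    show _ ↔ Bdd H w ∧ psum w n = j
    have : ((fl : Step) : ℤ) = 0 := rfl
    rw [this]
    constructor
    · rintro ⟨⟨hb, _⟩, hp⟩; exact ⟨hb, by omega⟩
    · rintro ⟨hb, hp⟩; exact ⟨⟨hb, by omega⟩, by omega⟩

lemma CO_rec_lt {n : ℕ} {H j : ℤ} (h0 : 0 ≤ j) (hH : j < H) :
    CO (n+1) H j = CO n H (j-1) + CO n H (j+1) + CO n H j := by
  unfold CO
  rw [cnt_succ]
  have key : ∀ s : Step, ∀ w : Fin n → Step,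
      (Bdd H (Fin.snoc w s) ∧ psum (Fin.snoc w s) (n+1) = j ∧ ¬ HasHorizAt (Fin.snoc w s) H)
      ↔ (Bdd H w ∧ psum w n = j - (s:ℤ) ∧ ¬ HasHorizAt w H) := by
    intro s w
    rw [Bdd_snoc, psum_snoc_last, HasHorizAt_snoc]
    constructor
    · rintro ⟨⟨hb, _⟩, hp, hh⟩
      exact ⟨hb, by omega, fun hx => hh (Or.inl hx)⟩
    · rintro ⟨hb, hp, hh⟩
      have hs := step_cases s
      refine ⟨⟨hb, by omega⟩, by omega, ?_⟩
      rintro (hx | ⟨hs0, hx⟩)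
      · exact hh hx
      · omega
  congr 1
  · congr 1
    · apply cnt_congr; intro w
      rw [key up w]
      show Bdd H w ∧ psum w n = j - 1 ∧ _ ↔ _
      rfl
    · apply cnt_congr; intro w
      rw [key dn w]
      show Bdd H w ∧ psum w n = j - (-1) ∧ _ ↔ Bdd H w ∧ psum w n = j + 1 ∧ _
      constructor
      · rintro ⟨a, b, c⟩; exact ⟨a, by omega, c⟩
      · rintro ⟨a, b, c⟩; exact ⟨a, by omega, c⟩
  · apply cnt_congr; intro w
    rw [key fl w]
    show Bdd H w ∧ psum w n = j - 0 ∧ _ ↔ Bdd H w ∧ psum w n = j ∧ _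
    constructor
    · rintro ⟨a, b, c⟩; exact ⟨a, by omega, c⟩
    · rintro ⟨a, b, c⟩; exact ⟨a, by omega, c⟩

lemma CO_rec_top {n : ℕ} {H : ℤ} (hH : 0 ≤ H) :
    CO (n+1) H H = CO n H (H-1) := by
  unfold CO
  rw [cnt_succ]
  have e1 : cnt n (fun w => Bdd H (Fin.snoc w up) ∧ psum (Fin.snoc w up) (n+1) = H
      ∧ ¬ HasHorizAt (Fin.snoc w up) H)
      = cnt n fun w => Bdd H w ∧ psum w n = H - 1 ∧ ¬ HasHorizAt w H := by
    apply cnt_congr; intro w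
    rw [Bdd_snoc, psum_snoc_last, HasHorizAt_snoc]
    have hu : ((up : Step) : ℤ) = 1 := rfl
    rw [hu]
    constructor
    · rintro ⟨⟨hb, _⟩, hp, hh⟩
      exact ⟨hb, by omega, fun hx => hh (Or.inl hx)⟩
    · rintro ⟨hb, hp, hh⟩
      refine ⟨⟨hb, by omega⟩, by omega, ?_⟩
      rintro (hx | ⟨hs0, _⟩)
      · exact hh hx
      · omega
  have e2 : cnt n (fun w => Bdd H (Fin.snoc w dn) ∧ psum (Fin.snoc w dn) (n+1) = H
      ∧ ¬ HasHorizAt (Fin.snoc w dn) H) = 0 := by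
    apply cnt_false
    intro w hw
    rw [Bdd_snoc, psum_snoc_last] at hw
    have hd : ((dn : Step) : ℤ) = -1 := rfl
    rw [hd] at hw
    obtain ⟨⟨hb, _⟩, hp, _⟩ := hw
    have := hb n le_rfl
    omega
  have e3 : cnt n (fun w => Bdd H (Fin.snoc w fl) ∧ psum (Fin.snoc w fl) (n+1) = H
      ∧ ¬ HasHorizAt (Fin.snoc w fl) H) = 0 := by
    apply cnt_false
    intro w hw
    rw [Bdd_snoc, psum_snoc_last, HasHorizAt_snoc] at hw
    have hf : ((fl : Step) : ℤ) = 0 := rfl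
    rw [hf] at hw
    obtain ⟨_, hp, hh⟩ := hw
    exact hh (Or.inr ⟨rfl, hp⟩)
  rw [e1, e2, e3]
  ring

/- ### T equals NN -/

lemma T_neg {n : ℕ} {m : ℤ} (h : m < 0) : T n m = 0 := by
  unfold T
  rw [if_neg (by omega)]

lemma T_rec (n : ℕ) (m : ℤ) : T (n+1) m = T n m + T n (m-1) + T n (m-2) := by
  rcases lt_or_ge m 0 with h | h
  · rw [T_neg h, T_neg (by omega), T_neg (by omega), T_neg (by omega)]
    ring
  · have hT : T (n+1) m = ((1 + Polynomial.X + Polynomial.X ^ 2 : Polynomial ℤ) ^ (n+1)).coeff m.toNat := by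
      unfold T; rw [if_pos h]
    rw [hT, pow_succ]
    have expand : ((1 + Polynomial.X + Polynomial.X ^ 2 : Polynomial ℤ) ^ n *
        (1 + Polynomial.X + Polynomial.X ^ 2)).coeff m.toNat
        = ((1 + Polynomial.X + Polynomial.X ^ 2 : Polynomial ℤ) ^ n).coeff m.toNat
          + (if 1 ≤ m.toNat then ((1 + Polynomial.X + Polynomial.X ^ 2 : Polynomial ℤ) ^ n).coeff (m.toNat - 1) else 0)
          + (if 2 ≤ m.toNat then ((1 + Polynomial.X + Polynomial.X ^ 2 : Polynomial ℤ) ^ n).coeff (m.toNat - 2) else 0) := by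
      set p := (1 + Polynomial.X + Polynomial.X ^ 2 : Polynomial ℤ) ^ n with hp
      rw [mul_add, mul_add, mul_one]
      rw [Polynomial.coeff_add, Polynomial.coeff_add]
      congr 1
      · congr 1
        rw [show (Polynomial.X : Polynomial ℤ) = Polynomial.X ^ 1 by ring,
          Polynomial.coeff_mul_X_pow']
      · rw [Polynomial.coeff_mul_X_pow']
    rw [expand]
    have g1 : ((1 + Polynomial.X + Polynomial.X ^ 2 : Polynomial ℤ) ^ n).coeff m.toNat
        = T n m := by
      unfold T; rw [if_pos h]
    have g2 : (if 1 ≤ m.toNat then ((1 + Polynomial.X + Polynomial.X ^ 2 : Polynomial ℤ) ^ n).coeff (m.toNat - 1) else 0)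
        = T n (m - 1) := by
      unfold T
      by_cases h1 : 1 ≤ m
      · rw [if_pos (by omega), if_pos (by omega)]
        congr 1
        omega
      · rw [if_neg (by omega), if_neg (by omega)]
    have g3 : (if 2 ≤ m.toNat then ((1 + Polynomial.X + Polynomial.X ^ 2 : Polynomial ℤ) ^ n).coeff (m.toNat - 2) else 0)
        = T n (m - 2) := by
      unfold T
      by_cases h2 : 2 ≤ m
      · rw [if_pos (by omega), if_pos (by omega)]
        congr 1
        omega
      · rw [if_neg (by omega), if_neg (by omega)]
    rw [g1, g2, g3]

lemma T_eq_NN (n : ℕ) (m : ℤ) : T n m = NN n (m - n) := by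
  induction n generalizing m with
  | zero =>
    rw [NN_zero]
    unfold T
    rcases lt_or_ge m 0 with h | h
    · rw [if_neg (by omega), if_neg (by omega)]
    · rw [if_pos h, pow_zero, Polynomial.coeff_one]
      push_cast
      by_cases h0 : m = 0
      · rw [if_pos (by omega), if_pos (by omega)]
      · rw [if_neg (by omega), if_neg (by omega)]
  | succ n ih =>
    rw [T_rec, NN_succ, ih, ih, ih]
    push_cast
    rw [show (m:ℤ) - ((n:ℤ)+1) - 1 = m - 2 - n by ring,
      show (m:ℤ) - ((n:ℤ)+1) + 1 = m - n by ring,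
      show (m:ℤ) - ((n:ℤ)+1) = m - 1 - n by ring]
    ring

/- ### the reflection formula F -/

noncomputable def F (n a : ℕ) (j : ℤ) : ℤ :=
  ∑ k ∈ Finset.Icc (-(n:ℤ)-2) ((n:ℤ)+2), (NN n (j + k*a) - NN n (-2 - j + k*a))

lemma NN_far {n a : ℕ} {y k : ℤ} (h : (n:ℤ) + |y| < |k| * a) : NN n (y + k*a) = 0 := by
  apply NN_vanish
  have h2 : |k*(a:ℤ)| = |k| * a := by
    rw [abs_mul, abs_of_nonneg (by positivity : (0:ℤ) ≤ (a:ℤ))]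
  have h3 : |k*(a:ℤ)| ≤ |y + k*a| + |y| := by
    calc |k*(a:ℤ)| = |(y + k*a) + (-y)| := by ring_nf
    _ ≤ |y + k*a| + |-y| := abs_add_le _ _
    _ = |y + k*a| + |y| := by rw [abs_neg]
  omega

lemma sum_shift {n a : ℕ} (ha : 2 ≤ a) {x : ℤ} (hx : |x| + 2 ≤ (a:ℤ)) :
    ∑ k ∈ Finset.Icc (-(n:ℤ)-2) ((n:ℤ)+2), NN n (x + (k-1)*a)
      = ∑ k ∈ Finset.Icc (-(n:ℤ)-2) ((n:ℤ)+2), NN n (x + k*a) := by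
  have ha' : (2:ℤ) ≤ (a:ℤ) := by exact_mod_cast ha
  have e1 : ∑ k ∈ Finset.Icc (-(n:ℤ)-2) ((n:ℤ)+2), NN n (x + (k-1)*a)
      = ∑ k ∈ Finset.Icc (-(n:ℤ)-3) ((n:ℤ)+1), NN n (x + k*a) := by
    apply Finset.sum_nbij' (i := fun k => k - 1) (j := fun k => k + 1)
    · intro k hk; simp only [Finset.mem_Icc] at hk ⊢; omega
    · intro k hk; simp only [Finset.mem_Icc] at hk ⊢; omega
    · intro k _; ring
    · intro k _; ring
    · intro k _; rfl
  rw [e1]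
  have sub1 : Finset.Icc (-(n:ℤ)-3) ((n:ℤ)+1) ⊆ Finset.Icc (-(n:ℤ)-3) ((n:ℤ)+2) := by
    apply Finset.Icc_subset_Icc_right; omega
  have sub2 : Finset.Icc (-(n:ℤ)-2) ((n:ℤ)+2) ⊆ Finset.Icc (-(n:ℤ)-3) ((n:ℤ)+2) := by
    apply Finset.Icc_subset_Icc_left; omega
  rw [Finset.sum_subset sub1, Finset.sum_subset sub2]
  · intro k hk hk2
    simp only [Finset.mem_Icc] at hk hk2
    have hke : k = -(n:ℤ)-3 := by omega
    apply NN_far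
    rw [hke]
    have : |(-(n:ℤ)-3)| = (n:ℤ)+3 := by rw [abs_of_nonpos (by omega)]; ring
    rw [this]
    nlinarith
  · intro k hk hk2
    simp only [Finset.mem_Icc] at hk hk2
    have hke : k = (n:ℤ)+2 := by omega
    apply NN_far
    rw [hke]
    have : |((n:ℤ)+2)| = (n:ℤ)+2 := by rw [abs_of_nonneg (by omega)]
    rw [this]
    nlinarith

lemma F_neg_one (n a : ℕ) : F n a (-1) = 0 := by
  unfold F
  apply Finset.sum_eq_zero
  intro k _
  have : (-2 : ℤ) - (-1) = -1 := by ring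
  rw [this]
  ring

lemma F_top_even (n a : ℕ) {H : ℤ} (hH : -1 ≤ H) (ha : (a:ℤ) = 2*H+4) :
    F n a (H+1) = 0 := by
  unfold F
  have e : ∀ k : ℤ, (-2 : ℤ) - (H+1) + k*a = (H+1) + (k-1)*a := by
    intro k; rw [ha]; ring
  have e2 : ∑ k ∈ Finset.Icc (-(n:ℤ)-2) ((n:ℤ)+2), (NN n ((H+1) + k*a) - NN n (-2 - (H+1) + k*a))
      = ∑ k ∈ Finset.Icc (-(n:ℤ)-2) ((n:ℤ)+2), (NN n ((H+1) + k*a) - NN n ((H+1) + (k-1)*a)) := by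
    apply Finset.sum_congr rfl
    intro k _
    rw [e k]
  rw [e2, Finset.sum_sub_distrib]
  rw [sum_shift (a := a) (by omega) (x := H+1) (by rw [abs_of_nonneg (by omega)]; omega)]
  ring

lemma F_top_odd (n a : ℕ) {H : ℤ} (hH : 0 ≤ H) (ha : (a:ℤ) = 2*H+3) :
    F n a H + F n a (H+1) = 0 := by
  unfold F
  have e1 : ∀ k : ℤ, (-2 : ℤ) - H + k*a = (H+1) + (k-1)*a := by
    intro k; rw [ha]; ring
  have e2 : ∀ k : ℤ, (-2 : ℤ) - (H+1) + k*a = H + (k-1)*a := by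
    intro k; rw [ha]; ring
  have r1 : ∑ k ∈ Finset.Icc (-(n:ℤ)-2) ((n:ℤ)+2), (NN n (H + k*a) - NN n (-2 - H + k*a))
      = ∑ k ∈ Finset.Icc (-(n:ℤ)-2) ((n:ℤ)+2), (NN n (H + k*a) - NN n ((H+1) + (k-1)*a)) := by
    apply Finset.sum_congr rfl; intro k _; rw [e1 k]
  have r2 : ∑ k ∈ Finset.Icc (-(n:ℤ)-2) ((n:ℤ)+2), (NN n ((H+1) + k*a) - NN n (-2 - (H+1) + k*a))
      = ∑ k ∈ Finset.Icc (-(n:ℤ)-2) ((n:ℤ)+2), (NN n ((H+1) + k*a) - NN n (H + (k-1)*a)) := by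
    apply Finset.sum_congr rfl; intro k _; rw [e2 k]
  rw [r1, r2, Finset.sum_sub_distrib, Finset.sum_sub_distrib]
  rw [sum_shift (a := a) (by omega) (x := H) (by rw [abs_of_nonneg (by omega)]; omega)]
  rw [sum_shift (a := a) (by omega) (x := H+1) (by rw [abs_of_nonneg (by omega)]; omega)]
  ring

lemma F_rec {n a : ℕ} {j : ℤ} (ha : 2 ≤ a) (hja : |j| + 3 ≤ (a:ℤ)) :
    F (n+1) a j = F n a (j-1) + F n a j + F n a (j+1) := by
  have ha' : (2:ℤ) ≤ (a:ℤ) := by exact_mod_cast ha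
  unfold F
  have hIcc : Finset.Icc (-((n+1:ℕ):ℤ)-2) (((n+1:ℕ):ℤ)+2) = Finset.Icc (-(n:ℤ)-3) ((n:ℤ)+3) := by
    push_cast
    congr 1 <;> ring
  rw [hIcc]
  have ext : ∀ y : ℤ, |y| ≤ (a:ℤ) →
      ∑ k ∈ Finset.Icc (-(n:ℤ)-2) ((n:ℤ)+2), (NN n (y + k*a) - NN n (-2 - y + k*a))
      = ∑ k ∈ Finset.Icc (-(n:ℤ)-3) ((n:ℤ)+3), (NN n (y + k*a) - NN n (-2 - y + k*a)) := by
    intro y hy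
    apply Finset.sum_subset (Finset.Icc_subset_Icc (by omega) (by omega))
    intro k hk hk2
    simp only [Finset.mem_Icc] at hk hk2
    have hk3 : |k| = (n:ℤ)+3 := by
      have hor : k = -(n:ℤ)-3 ∨ k = (n:ℤ)+3 := by omega
      rcases hor with h | h
      · rw [h, abs_of_nonpos (by omega)]; ring
      · rw [h, abs_of_nonneg (by omega)]
    have hmul : ((n:ℤ)+2) * 2 ≤ ((n:ℤ)+2) * a :=
      mul_le_mul_of_nonneg_left ha' (by positivity)
    have v1 : NN n (y + k*a) = 0 := by
      apply NN_far
      rw [hk3]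
      nlinarith [abs_nonneg y]
    have v2 : NN n (-2 - y + k*a) = 0 := by
      apply NN_far
      rw [hk3]
      have habs : |(-2 - y : ℤ)| ≤ |y| + 2 := by
        calc |(-2 - y : ℤ)| = |(-(2 + y) : ℤ)| := by ring_nf
        _ = |(2 + y : ℤ)| := abs_neg _
        _ ≤ |(2:ℤ)| + |y| := abs_add_le _ _
        _ = |y| + 2 := by rw [abs_two]; ring
      nlinarith [abs_nonneg y]
    rw [v1, v2]; ring
  have b1 : |(j - 1 : ℤ)| ≤ (a:ℤ) := by
    have h1 : |(j-1 : ℤ)| ≤ |j| + |(1:ℤ)| := abs_sub _ _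
    rw [abs_one] at h1
    omega
  have b2 : |j| ≤ (a:ℤ) := by omega
  have b3 : |(j + 1 : ℤ)| ≤ (a:ℤ) := by
    have h1 : |(j+1 : ℤ)| ≤ |j| + |(1:ℤ)| := abs_add_le _ _
    rw [abs_one] at h1
    omega
  rw [ext (j-1) b1, ext j b2, ext (j+1) b3]
  rw [← Finset.sum_add_distrib, ← Finset.sum_add_distrib]
  apply Finset.sum_congr rfl
  intro k _
  rw [NN_succ, NN_succ]
  ring_nf

lemma F_base {a : ℕ} {j : ℤ} (h0 : 0 ≤ j) (hja : j + 3 ≤ (a:ℤ)) :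
    F 0 a j = if j = 0 then 1 else 0 := by
  unfold F
  have hIcc : Finset.Icc (-((0:ℕ):ℤ)-2) (((0:ℕ):ℤ)+2) = Finset.Icc (-2 : ℤ) 2 := by
    norm_num
  rw [hIcc]
  rw [Finset.sum_eq_single_of_mem 0 (by simp)]
  · rw [NN_zero, NN_zero]
    simp only [zero_mul, add_zero]
    split_ifs <;> omega
  · intro k hk hk0
    simp only [Finset.mem_Icc] at hk
    obtain ⟨hk1, hk2⟩ := hk
    rw [NN_zero, NN_zero]
    interval_cases k <;> split_ifs <;> omega

lemma CO_eq_F (H : ℕ) : ∀ n : ℕ, ∀ j : ℤ, 0 ≤ j → j ≤ (H:ℤ) →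
    CO n (H:ℤ) j = F n (2*H+3) j := by
  have hacast : ((2*H+3 : ℕ) : ℤ) = 2*(H:ℤ)+3 := by push_cast; ring
  intro n
  induction n with
  | zero =>
    intro j h0 hj
    rw [CO_base (by positivity), F_base h0 (by omega)]
  | succ n ih =>
    intro j h0 hj
    have hFrec : F (n+1) (2*H+3) j = F n (2*H+3) (j-1) + F n (2*H+3) j + F n (2*H+3) (j+1) := by
      apply F_rec (by omega)
      rw [abs_of_nonneg h0]
      omega
    rcases eq_or_lt_of_le hj with he | hlt
    · subst he
      rw [CO_rec_top (by positivity), hFrec]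
      have htop : F n (2*H+3) (H:ℤ) + F n (2*H+3) ((H:ℤ)+1) = 0 :=
        F_top_odd n (2*H+3) (by positivity) (by omega)
      have hlow : CO n (H:ℤ) ((H:ℤ)-1) = F n (2*H+3) ((H:ℤ)-1) := by
        rcases eq_or_lt_of_le (show (0:ℤ) ≤ H by positivity) with h0' | h0'
        · rw [show ((H:ℤ)-1) = -1 by omega, CO_out (by omega), F_neg_one]
        · exact ih ((H:ℤ)-1) (by omega) (by omega)
      rw [hlow]
      omega
    · rw [CO_rec_lt h0 hlt, hFrec]
      have h1 : CO n (H:ℤ) (j-1) = F n (2*H+3) (j-1) := by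
        rcases eq_or_lt_of_le h0 with h0' | h0'
        · rw [show (j-1 : ℤ) = -1 by omega, CO_out (by omega), F_neg_one]
        · exact ih (j-1) (by omega) (by omega)
      have h2 : CO n (H:ℤ) j = F n (2*H+3) j := ih j h0 (by omega)
      have h3 : CO n (H:ℤ) (j+1) = F n (2*H+3) (j+1) := ih (j+1) (by omega) (by omega)
      rw [h1, h2, h3]
      ring

lemma CE_eq_F (H : ℕ) : ∀ n : ℕ, ∀ j : ℤ, 0 ≤ j → j ≤ (H:ℤ) →
    CE n (H:ℤ) j = F n (2*H+4) j := by
  have hacast : ((2*H+4 : ℕ) : ℤ) = 2*(H:ℤ)+4 := by push_cast; ring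
  intro n
  induction n with
  | zero =>
    intro j h0 hj
    rw [CE_base (by positivity), F_base h0 (by omega)]
  | succ n ih =>
    intro j h0 hj
    have hFrec : F (n+1) (2*H+4) j = F n (2*H+4) (j-1) + F n (2*H+4) j + F n (2*H+4) (j+1) := by
      apply F_rec (by omega)
      rw [abs_of_nonneg h0]
      omega
    rw [CE_rec h0 hj, hFrec]
    have h1 : CE n (H:ℤ) (j-1) = F n (2*H+4) (j-1) := by
      rcases eq_or_lt_of_le h0 with h0' | h0'
      · rw [show (j-1 : ℤ) = -1 by omega, CE_out (by omega), F_neg_one]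
      · exact ih (j-1) (by omega) (by omega)
    have h2 : CE n (H:ℤ) j = F n (2*H+4) j := ih j h0 (by omega)
    have h3 : CE n (H:ℤ) (j+1) = F n (2*H+4) (j+1) := by
      rcases eq_or_lt_of_le hj with hj' | hj'
      · rw [hj', CE_out (by omega)]
        rw [show ((H:ℤ)+1) = ((H:ℤ))+1 from rfl]
        rw [F_top_even n (2*H+4) (by omega) (by omega)]
      · exact ih (j+1) (by omega) (by omega)
    rw [h1, h2, h3]
    ring

/- ### S in terms of F -/

lemma S_as_NN (n a : ℕ) : S n a = ∑ k ∈ Finset.Icc (1:ℤ) ((n:ℤ)+2),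
    (NN n (2 - k*a) - 2*NN n (-(k*a)) + NN n (-2 - k*a)) := by
  unfold S
  apply Finset.sum_nbij' (i := fun (k:ℕ) => (k:ℤ)) (j := fun (k:ℤ) => k.toNat)
  · intro k hk
    simp only [Finset.mem_Icc] at hk ⊢
    omega
  · intro k hk
    simp only [Finset.mem_Icc] at hk ⊢
    omega
  · intro k _; simp
  · intro k hk
    simp only [Finset.mem_Icc] at hk
    omega
  · intro k _
    rw [T_eq_NN, T_eq_NN, T_eq_NN]
    rw [show (n:ℤ) + 2 - (k:ℤ)*(a:ℤ) - (n:ℤ) = 2 - (k:ℤ)*(a:ℤ) by ring,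
      show (n:ℤ) - (k:ℤ)*(a:ℤ) - (n:ℤ) = -((k:ℤ)*(a:ℤ)) by ring,
      show (n:ℤ) - 2 - (k:ℤ)*(a:ℤ) - (n:ℤ) = -2 - (k:ℤ)*(a:ℤ) by ring]

lemma F_split (n a : ℕ) : F n a 0 = (NN n 0 - NN n (-2))
    + ∑ k ∈ Finset.Icc (1:ℤ) ((n:ℤ)+2), (NN n (k*a) - NN n (-2 + k*a))
    + ∑ k ∈ Finset.Icc (1:ℤ) ((n:ℤ)+2), (NN n (-(k*a)) - NN n (-2 - k*a)) := by
  unfold F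
  have hsplit : Finset.Icc (-(n:ℤ)-2) ((n:ℤ)+2)
      = Finset.Icc (-(n:ℤ)-2) (-1) ∪ Finset.Icc (0:ℤ) ((n:ℤ)+2) := by
    ext x
    simp only [Finset.mem_Icc, Finset.mem_union]
    omega
  have hdisj : Disjoint (Finset.Icc (-(n:ℤ)-2) (-1)) (Finset.Icc (0:ℤ) ((n:ℤ)+2)) := by
    rw [Finset.disjoint_left]
    intro x hx hx2
    simp only [Finset.mem_Icc] at hx hx2
    omega
  rw [hsplit, Finset.sum_union hdisj]
  have h0 : Finset.Icc (0:ℤ) ((n:ℤ)+2) = insert 0 (Finset.Icc (1:ℤ) ((n:ℤ)+2)) := by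
    ext x
    simp only [Finset.mem_Icc, Finset.mem_insert]
    omega
  rw [h0, Finset.sum_insert (by simp)]
  have hneg : ∑ k ∈ Finset.Icc (-(n:ℤ)-2) (-1), (NN n ((0:ℤ) + k*a) - NN n (-2 - 0 + k*a))
      = ∑ k ∈ Finset.Icc (1:ℤ) ((n:ℤ)+2), (NN n (-(k*a)) - NN n (-2 - k*a)) := by
    apply Finset.sum_nbij' (i := fun (k:ℤ) => -k) (j := fun (k:ℤ) => -k)
    · intro k hk; simp only [Finset.mem_Icc] at hk ⊢; omega
    · intro k hk; simp only [Finset.mem_Icc] at hk ⊢; omega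
    · intro k _; ring
    · intro k _; ring
    · intro k _
      rw [show (0:ℤ) + k*(a:ℤ) = -(-k*(a:ℤ)) by ring,
        show (-2 : ℤ) - 0 + k*(a:ℤ) = -2 - (-k)*(a:ℤ) by ring]
  rw [hneg]
  have hmain : ∑ k ∈ Finset.Icc (1:ℤ) ((n:ℤ)+2), (NN n ((0:ℤ) + k*a) - NN n (-2 - 0 + k*a))
      = ∑ k ∈ Finset.Icc (1:ℤ) ((n:ℤ)+2), (NN n (k*a) - NN n (-2 + k*a)) := by
    apply Finset.sum_congr rfl
    intro k _
    rw [show (0:ℤ) + k*(a:ℤ) = k*(a:ℤ) by ring, show (-2:ℤ) - 0 + k*(a:ℤ) = -2 + k*(a:ℤ) by ring]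
  rw [hmain]
  rw [show (0:ℤ) + 0*(a:ℤ) = 0 by ring, show (-2:ℤ) - 0 + 0*(a:ℤ) = -2 by ring]
  ring

lemma S_eq_F (n a : ℕ) : S n a = NN n 0 - NN n (-2) - F n a 0 := by
  rw [S_as_NN, F_split]
  have hz : ∑ k ∈ Finset.Icc (1:ℤ) ((n:ℤ)+2),
      ((NN n (2 - k*a) - 2*NN n (-(k*a)) + NN n (-2 - k*a))
        + (NN n (k*a) - NN n (-2 + k*a)) + (NN n (-(k*a)) - NN n (-2 - k*a))) = 0 := by
    apply Finset.sum_eq_zero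
    intro k _
    have e1 : NN n (2 - k*(a:ℤ)) = NN n (-2 + k*(a:ℤ)) := by
      rw [NN_symm n (2 - k*(a:ℤ)), show -(2 - k*(a:ℤ)) = -2 + k*(a:ℤ) by ring]
    have e2 : NN n (-(k*(a:ℤ))) = NN n (k*(a:ℤ)) := by
      rw [NN_symm n (-(k*(a:ℤ))), neg_neg]
    rw [e1, e2]
    ring
  rw [Finset.sum_add_distrib, Finset.sum_add_distrib] at hz
  linarith

/- ### final assembly -/

theorem no_horiz_count_trinomial' (n h : ℕ) :
    ((Finset.univ.filter fun w : Fin n → Step =>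
      IsMotzkin w ∧ height w = (h : ℤ) ∧ ¬ HasHorizAt w (h : ℤ)).card : ℤ)
      = S n (2 * h + 2) - S n (2 * h + 3) := by
  set A : Finset (Fin n → Step) :=
    Finset.univ.filter (fun w => Bdd (h:ℤ) w ∧ psum w n = 0 ∧ ¬ HasHorizAt w (h:ℤ)) with hA
  set B : Finset (Fin n → Step) :=
    Finset.univ.filter (fun w => Bdd ((h:ℤ)-1) w ∧ psum w n = 0) with hB
  have hBA : B ⊆ A := by
    intro w hw
    rw [hB, Finset.mem_filter] at hw
    obtain ⟨_, hbdd, hp⟩ := hw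
    rw [hA, Finset.mem_filter]
    refine ⟨Finset.mem_univ _, fun k hk => ?_, hp, ?_⟩
    · have := hbdd k hk; omega
    · rintro ⟨i, _, hpi⟩
      have hle : (i:ℕ) + 1 ≤ n := i.2
      have := hbdd ((i:ℕ)+1) hle
      omega
  have hset : (Finset.univ.filter fun w : Fin n → Step =>
      IsMotzkin w ∧ height w = (h : ℤ) ∧ ¬ HasHorizAt w (h : ℤ)) = A \ B := by
    ext w
    simp only [Finset.mem_filter, Finset.mem_univ, true_and, Finset.mem_sdiff, hA, hB]
    constructor
    · rintro ⟨⟨hnn, hp⟩, hht, hhz⟩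
      have hub : ∀ k ≤ n, psum w k ≤ (h:ℤ) := by
        intro k hk
        have hmem : k ∈ Finset.range (n+1) := Finset.mem_range.mpr (by omega)
        have := Finset.le_sup' (psum w) hmem
        rw [← height] at this
        omega
      refine ⟨⟨fun k hk => ⟨hnn k (Finset.mem_range.mpr (by omega)), hub k hk⟩, hp, hhz⟩, ?_⟩
      rintro ⟨hbdd, _⟩
      have : height w ≤ (h:ℤ) - 1 := by
        apply Finset.sup'_le
        intro k hk
        exact (hbdd k (by omega ∘ Finset.mem_range.mp $ hk)).2
      omega
    · rintro ⟨⟨hbdd, hp, hhz⟩, hnB⟩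
      have hnn : ∀ k ∈ Finset.range (n+1), 0 ≤ psum w k :=
        fun k hk => (hbdd k (by omega ∘ Finset.mem_range.mp $ hk)).1
      refine ⟨⟨hnn, hp⟩, ?_, hhz⟩
      have hle : height w ≤ (h:ℤ) := by
        apply Finset.sup'_le
        intro k hk
        exact (hbdd k (by omega ∘ Finset.mem_range.mp $ hk)).2
      have hge : (h:ℤ) ≤ height w := by
        by_contra hcon
        apply hnB
        refine ⟨fun k hk => ?_, hp⟩
        have h1 := (hbdd k hk).1
        have h2 : psum w k ≤ height w := by
          apply Finset.le_sup'
          exact Finset.mem_range.mpr (by omega)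
        constructor
        · exact h1
        · omega
      omega
  rw [hset]
  have hcard : ((A \ B).card : ℤ) = (A.card : ℤ) - (B.card : ℤ) := by
    rw [Finset.card_sdiff_of_subset hBA]
    have := Finset.card_le_card hBA
    push_cast [Nat.cast_sub this]
    ring
  rw [hcard]
  have hCO : (A.card : ℤ) = CO n (h:ℤ) 0 := by
    rw [hA]; unfold CO cnt; congr 1; congr
  have hCE : (B.card : ℤ) = CE n ((h:ℤ)-1) 0 := by
    rw [hB]; unfold CE cnt; congr 1; congr
  rw [hCO, hCE]
  have h1 : CO n (h:ℤ) 0 = F n (2*h+3) 0 := CO_eq_F h n 0 le_rfl (by positivity)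
  have h2 : CE n ((h:ℤ)-1) 0 = F n (2*h+2) 0 := by
    rcases Nat.eq_zero_or_pos h with h0 | h0
    · subst h0
      rw [CE_negH (by norm_num)]
      have := F_top_even n 2 (H := -1) (by norm_num) (by norm_num)
      norm_num at this
      rw [show 2*0+2 = 2 by norm_num]
      omega
    · have hcast : ((h:ℤ) - 1) = (((h-1 : ℕ)):ℤ) := by omega
      rw [hcast]
      have := CE_eq_F (h-1) n 0 le_rfl (by positivity)
      rw [this, show 2*(h-1)+4 = 2*h+2 by omega]
  rw [h1, h2]
  rw [S_eq_F n (2*h+2), S_eq_F n (2*h+3)]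
  ring

/-- The number of Motzkin paths of length `n` with height exactly `h` having no
horizontal step at level `h` is `S n (2h+2) - S n (2h+3)`. -/
theorem no_horiz_count_trinomial (n h : ℕ) :
    ((Finset.univ.filter fun w : Fin n → Step =>
      IsMotzkin w ∧ height w = (h : ℤ) ∧ ¬ HasHorizAt w (h : ℤ)).card : ℤ)
      = S n (2 * h + 2) - S n (2 * h + 3) := by
  exact no_horiz_count_trinomial' n h
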